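/- Let E be an ℝ-linear subspace of ℝⁿ and D a discrete additive subgroup of ℝⁿ with E ∩ span_ℝ(D) = {0}. Let f₁ : ℝⁿ → ℝⁿ be an ℝ-linear map and f₂ : D → ℝⁿ a homomorphism of additive groups. Then the set {x + y : x ∈ E, y ∈ D, f₁(x) = 0 and f₂(y) = 0} is closed in ℝⁿ; in particular, if E', D' satisfy E' ∩ span_ℝ(D') = {0}, f₁(E) ⊆ E' and f₂(D) ⊆ D', this set is the kernel of the homomorphism of closed additive groups f(x + y) = f₁(x) + f₂(y), and hence Ker(f) is a closed additive subgroup of ℝⁿ. -/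

import Mathlib

/-- Corollary 4.2(i): for `E` a subspace, `D` a discrete additive subgroup with
`E ∩ span ℝ D = {0}`, a linear map `f₁` and an additive homomorphism `f₂ : D → ℝⁿ`,
the set `{x + y : x ∈ E, y ∈ D, f₁ x = 0, f₂ y = 0}` (the kernel of the
homomorphism of closed additive groups `x + y ↦ f₁ x + f₂ y`) is a closed
additive subgroup of `ℝⁿ`. -/
theorem isClosed_ker_hom_closed_additive_group (n : ℕ)
    (E : Submodule ℝ (Fin n → ℝ)) (D : AddSubgroup (Fin n → ℝ))
    (hD : DiscreteTopology D)
    (hED : E ⊓ Submodule.span ℝ (D : Set (Fin n → ℝ)) = ⊥)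
    (f₁ : (Fin n → ℝ) →ₗ[ℝ] (Fin n → ℝ)) (f₂ : D →+ (Fin n → ℝ)) :
    IsClosed {z : Fin n → ℝ | ∃ x ∈ E, ∃ y : D, f₁ x = 0 ∧ f₂ y = 0 ∧ z = x + ↑y} ∧
      ∃ K : AddSubgroup (Fin n → ℝ),
        (K : Set (Fin n → ℝ)) =
          {z : Fin n → ℝ | ∃ x ∈ E, ∃ y : D, f₁ x = 0 ∧ f₂ y = 0 ∧ z = x + ↑y} := by
  set S := {z : Fin n → ℝ | ∃ x ∈ E, ∃ y : D, f₁ x = 0 ∧ f₂ y = 0 ∧ z = x + ↑y} with hS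
  constructor
  · -- build a complement W of E containing span ℝ D
    set V := Submodule.span ℝ (D : Set (Fin n → ℝ)) with hV
    obtain ⟨s, hs⟩ := Submodule.exists_isCompl (E ⊔ V)
    set W := V ⊔ s with hW
    have hcompl : IsCompl E W := by
      constructor
      · rw [disjoint_iff]
        rw [Submodule.eq_bot_iff]
        rintro x ⟨hxE, hxW⟩
        obtain ⟨d, hd, t, ht, hx⟩ := Submodule.mem_sup.mp hxW
        have htmem : t ∈ (E ⊔ V) ⊓ s := by
          refine ⟨?_, ht⟩
          have : t = x - d := by rw [← hx]; ring
          rw [this]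
          exact Submodule.sub_mem _ (Submodule.mem_sup_left hxE)
            (Submodule.mem_sup_right hd)
        have ht0 : t = 0 := by
          have := hs.inf_eq_bot
          rw [Submodule.eq_bot_iff] at this
          exact this t htmem
        have hxd : x = d := by rw [← hx, ht0, add_zero]
        have : x ∈ E ⊓ V := ⟨hxE, hxd ▸ hd⟩
        rw [hED] at this
        exact this
      · rw [codisjoint_iff, hW, ← sup_assoc]
        exact hs.sup_eq_top
    -- projection onto W along E
    set π : (Fin n → ℝ) →ₗ[ℝ] (Fin n → ℝ) :=
      W.subtype.comp (W.projectionOnto E hcompl.symm) with hπ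
    have hπE : ∀ x ∈ E, π x = 0 := fun x hx => by
      simp [hπ, Submodule.projectionOnto_apply_of_mem_right hcompl.symm hx]
    have hπW : ∀ x ∈ W, π x = x := fun x hx => by
      simp [hπ, Submodule.projectionOnto_apply_of_mem_left hcompl.symm hx]
    have hπc : Continuous π := π.continuous_of_finiteDimensional
    -- the two closed pieces
    have hDclosed : IsClosed (D : Set (Fin n → ℝ)) := AddSubgroup.isClosed_of_discrete
    set D'' : Set (Fin n → ℝ) := Subtype.val '' {y : D | f₂ y = 0} with hD''
    have hD''closed : IsClosed D'' :=
      hDclosed.isClosedEmbedding_subtypeVal.isClosedMap _ (isClosed_discrete _)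
    set E' : Submodule ℝ (Fin n → ℝ) := E ⊓ LinearMap.ker f₁ with hE'
    have hE'closed : IsClosed (E' : Set (Fin n → ℝ)) := Submodule.closed_of_finiteDimensional E'
    have key : S = π ⁻¹' D'' ∩ (fun z => z - π z) ⁻¹' (E' : Set (Fin n → ℝ)) := by
      ext z
      constructor
      · rintro ⟨x, hxE, y, hf1, hf2, rfl⟩
        have hyW : (y : Fin n → ℝ) ∈ W :=
          Submodule.mem_sup_left (Submodule.subset_span y.2)
        have hπz : π (x + ↑y) = ↑y := by
          rw [map_add, hπE x hxE, hπW _ hyW, zero_add]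
        constructor
        · rw [Set.mem_preimage, hπz]
          exact ⟨y, hf2, rfl⟩
        · rw [Set.mem_preimage, hπz]
          have : x + ↑y - ↑y = x := by ring
          rw [this]
          exact ⟨hxE, hf1⟩
      · rintro ⟨hz1, hz2⟩
        obtain ⟨y, hf2, hy⟩ := hz1
        obtain ⟨hxE, hf1⟩ := hz2
        exact ⟨z - π z, hxE, y, hf1, hf2, by rw [hy]; ring⟩
    rw [key]
    exact (hD''closed.preimage hπc).inter
      (hE'closed.preimage (by fun_prop))
  · have h0 : (0 : Fin n → ℝ) ∈ S := ⟨0, E.zero_mem, 0, map_zero f₁, map_zero f₂, by simp⟩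
    have hadd : ∀ {a b : Fin n → ℝ}, a ∈ S → b ∈ S → a + b ∈ S := by
      rintro a b ⟨x₁, hx₁, y₁, h₁, h₁', rfl⟩ ⟨x₂, hx₂, y₂, h₂, h₂', rfl⟩
      refine ⟨x₁ + x₂, E.add_mem hx₁ hx₂, y₁ + y₂, ?_, ?_, ?_⟩
      · rw [map_add, h₁, h₂, add_zero]
      · rw [map_add, h₁', h₂', add_zero]
      · push_cast; ring
    have hneg : ∀ {a : Fin n → ℝ}, a ∈ S → -a ∈ S := by
      rintro a ⟨x, hx, y, h, h', rfl⟩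
      refine ⟨-x, E.neg_mem hx, -y, ?_, ?_, ?_⟩
      · rw [map_neg, h, neg_zero]
      · rw [map_neg, h', neg_zero]
      · push_cast; ring
    exact ⟨{ carrier := S, zero_mem' := h0, add_mem' := hadd, neg_mem' := hneg }, rfl⟩
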